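/- arXiv:2408.05990 — 2 statements merged into one kernel-verified Lean document; each statement's English description precedes it below -/
import Mathlib

section
/- Let θ*, θtrue, e be real numbers, σ > 0, τ > 0, and z* ∈ [−1,1], satisfying θ* − θtrue + ((−|θ*| + √(|θ*|² + 4σ²))/2)·z* = e. If |θtrue| ≥ θmin > 0, |e| < θmin/2, and τ + σ < θmin/2, then |θ*| > τ. -/
/-- Support recovery: under the stationarity equation with shrinkage term,
if `|θtrue| ≥ θmin`, the noise is small (`|e| < θmin/2`), and `τ + σ < θmin/2`,
then `|θ*| > τ`. -/
theorem stmt13 (θs θt e σ τ θmin zs : ℝ) (hσ : 0 < σ) (hτ : 0 < τ)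
    (hz : zs ∈ Set.Icc (-1 : ℝ) 1)
    (heq : θs - θt + ((-|θs| + Real.sqrt (|θs| ^ 2 + 4 * σ ^ 2)) / 2) * zs = e)
    (hθmin : 0 < θmin) (ht : |θt| ≥ θmin) (he : |e| < θmin / 2)
    (hts : τ + σ < θmin / 2) :
    |θs| > τ := by
  by_contra hle
  push_neg at hle
  set t : ℝ := Real.sqrt (|θs| ^ 2 + 4 * σ ^ 2) with hts'
  have htnn : 0 ≤ t := Real.sqrt_nonneg _
  have htsq : t ^ 2 = |θs| ^ 2 + 4 * σ ^ 2 := by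
    rw [hts']; exact Real.sq_sqrt (by positivity)
  have ha : 0 ≤ |θs| := abs_nonneg θs
  have h1 : t ≤ |θs| + 2 * σ := by nlinarith
  have h2 : |θs| ≤ t := by nlinarith
  set s : ℝ := (-|θs| + t) / 2 with hsdef
  have hs0 : 0 ≤ s := by simp [hsdef]; linarith
  have hsσ : s ≤ σ := by simp [hsdef]; linarith
  obtain ⟨hz1, hz2⟩ := hz
  have hθt : θt = θs + s * zs - e := by linarith [heq]
  have habs : |θt| ≤ |θs| + s + |e| := by
    rw [hθt]
    calc |θs + s * zs - e| ≤ |θs + s * zs| + |e| := abs_sub _ _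
      _ ≤ |θs| + |s * zs| + |e| := by linarith [abs_add_le θs (s * zs)]
      _ ≤ |θs| + s + |e| := by
          have : |s * zs| ≤ s := by
            rw [abs_mul, abs_of_nonneg hs0]
            nlinarith [abs_le.mpr ⟨hz1, hz2⟩]
          linarith
  linarith
end

section
/- Let θ*, θtrue, e be reals, σ > 0, τ > 0, z* ∈ [−1,1], with θ* − θtrue + ((−|θ*| + √(|θ*|² + 4σ²))/2) z* = e, |θ*| > τ, and |e| ≤ τ. Then |θtrue − θ*| ≤ τ + σ²/τ. -/
/-- Per-coordinate error bound: if `θ* − θtrue + s·z* = e` with the shrinkage term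
`s = (−|θ*| + √(|θ*|² + 4σ²))/2`, `|z*| ≤ 1`, `|θ*| > τ` and `|e| ≤ τ`, then
`|θtrue − θ*| ≤ τ + σ²/τ`. -/
theorem stmt15 (θs θt e σ τ zs : ℝ) (hσ : 0 < σ) (hτ : 0 < τ)
    (hz : zs ∈ Set.Icc (-1 : ℝ) 1)
    (heq : θs - θt + ((-|θs| + Real.sqrt (|θs| ^ 2 + 4 * σ ^ 2)) / 2) * zs = e)
    (hgt : |θs| > τ) (he : |e| ≤ τ) :
    |θt - θs| ≤ τ + σ ^ 2 / τ := by
  set a := |θs| with ha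
  have ha0 : 0 < a := lt_trans hτ hgt
  set s := (-a + Real.sqrt (a ^ 2 + 4 * σ ^ 2)) / 2 with hs
  have hzabs : |zs| ≤ 1 := abs_le.2 ⟨hz.1, hz.2⟩
  -- sqrt bound
  have hsqrt : Real.sqrt (a ^ 2 + 4 * σ ^ 2) ≤ a + 2 * σ ^ 2 / a := by
    have h1 : a ^ 2 + 4 * σ ^ 2 ≤ (a + 2 * σ ^ 2 / a) ^ 2 := by
      have : (a + 2 * σ ^ 2 / a) ^ 2 = a ^ 2 + 4 * σ ^ 2 + (2 * σ ^ 2 / a) ^ 2 := by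
        field_simp; ring
      nlinarith [sq_nonneg (2 * σ ^ 2 / a)]
    calc Real.sqrt (a ^ 2 + 4 * σ ^ 2) ≤ Real.sqrt ((a + 2 * σ ^ 2 / a) ^ 2) :=
          Real.sqrt_le_sqrt h1
      _ = a + 2 * σ ^ 2 / a := Real.sqrt_sq (by positivity)
  have hs_nonneg : 0 ≤ s := by
    have : a ≤ Real.sqrt (a ^ 2 + 4 * σ ^ 2) := by
      have := Real.sqrt_le_sqrt (show a ^ 2 ≤ a ^ 2 + 4 * σ ^ 2 by nlinarith)
      rwa [Real.sqrt_sq ha0.le] at this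
    simp only [hs]; linarith
  have hs_le : s ≤ σ ^ 2 / τ := by
    have h2 : s ≤ σ ^ 2 / a := by
      have hr : 2 * σ ^ 2 / a = 2 * (σ ^ 2 / a) := by ring
      simp only [hs]; linarith [hr ▸ hsqrt]
    have h3 : σ ^ 2 / a ≤ σ ^ 2 / τ := by
      apply div_le_div_of_nonneg_left (by positivity) hτ hgt.le
    linarith
  have key : θt - θs = s * zs - e := by linarith [heq]
  calc |θt - θs| = |s * zs - e| := by rw [key]
    _ ≤ |s * zs| + |e| := abs_sub _ _
    _ ≤ s + τ := by
        have : |s * zs| ≤ s := by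
          rw [abs_mul, abs_of_nonneg hs_nonneg]
          nlinarith [abs_nonneg zs]
        linarith
    _ ≤ τ + σ ^ 2 / τ := by linarith
end
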